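/- Fix a real number N > 0 and for each natural number n define z_n := (∏_{k=0}^{2n−1}(N+2k)) / (n!·24^n). Then z_n is asymptotic to 3^{(N−1)/2}·(2/3)^{n+(N−1)/2}·Γ(n+(N−1)/2) / (√(2π)·Γ(N/2)) as n → ∞; that is, the ratio of z_n to this expression tends to 1 as n → ∞. -/
import Mathlib

open Real Filter Finset

lemma scalar_id (N : ℝ) (n : ℕ) :
    (24:ℝ)^n * ((3:ℝ)^((N-1)/2) * (2/3:ℝ)^((n:ℝ)+(N-1)/2)) =
      (2:ℝ)^(2*n) * (2:ℝ)^(2*(n:ℝ) + N/2 - 1) * Real.sqrt 2 := by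
  have h1 : (2/3 : ℝ)^((n:ℝ)+(N-1)/2)
      = (2/3:ℝ)^(n:ℕ) * ((2:ℝ)^((N-1)/2) / (3:ℝ)^((N-1)/2)) := by
    rw [Real.rpow_add (by norm_num), Real.rpow_natCast,
      Real.div_rpow (by norm_num) (by norm_num)]
  have h2 : (2:ℝ)^(2*(n:ℝ) + N/2 - 1) * Real.sqrt 2
      = (2:ℝ)^(2*n : ℕ) * (2:ℝ)^((N-1)/2) := by
    rw [Real.sqrt_eq_rpow, ← Real.rpow_natCast 2 (2*n), ← Real.rpow_add (by norm_num),
      ← Real.rpow_add (by norm_num)]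
    congr 1
    push_cast; ring
  have h3 : ((3:ℝ)^((N-1)/2)) ≠ 0 := ne_of_gt (Real.rpow_pos_of_pos (by norm_num) _)
  have h4 : (24:ℝ)^n * (2/3:ℝ)^n = (2:ℝ)^(2*n) * (2:ℝ)^(2*n:ℕ) := by
    rw [← mul_pow, ← mul_pow, pow_mul]
    norm_num
  have h5 : (3:ℝ)^((N-1)/2) * ((2:ℝ)^((N-1)/2) / (3:ℝ)^((N-1)/2)) = (2:ℝ)^((N-1)/2) := by
    field_simp
  calc (24:ℝ)^n * ((3:ℝ)^((N-1)/2) * (2/3:ℝ)^((n:ℝ)+(N-1)/2))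
      = ((24:ℝ)^n * (2/3:ℝ)^n) * ((3:ℝ)^((N-1)/2) * ((2:ℝ)^((N-1)/2) / (3:ℝ)^((N-1)/2))) := by
        rw [h1]; ring
    _ = ((2:ℝ)^(2*n) * (2:ℝ)^(2*n:ℕ)) * (2:ℝ)^((N-1)/2) := by rw [h4, h5]
    _ = (2:ℝ)^(2*n) * ((2:ℝ)^(2*(n:ℝ) + N/2 - 1) * Real.sqrt 2) := by rw [h2]; ring
    _ = _ := by ring



lemma gamma_prod (s : ℝ) (hs : 0 < s) (m : ℕ) :
    Real.Gamma s * ∏ k ∈ Finset.range m, (s + k) = Real.Gamma (s + m) := by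
  induction m with
  | zero => simp
  | succ m ih =>
    rw [Finset.prod_range_succ, ← mul_assoc, ih]
    have h1 : s + (m + 1 : ℕ) = (s + m) + 1 := by push_cast; ring
    rw [h1, Real.Gamma_add_one (by positivity)]
    ring

lemma ratio_eq (N : ℝ) (hN : 0 < N) (n : ℕ) (hn : 1 ≤ n) :
    ((∏ k ∈ Finset.range (2 * n), (N + 2 * (k : ℝ))) /
        ((n.factorial : ℝ) * 24 ^ n)) /
      ((3 : ℝ) ^ ((N - 1) / 2) * (2 / 3 : ℝ) ^ ((n : ℝ) + (N - 1) / 2) *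
          Real.Gamma ((n : ℝ) + (N - 1) / 2) /
        (Real.sqrt (2 * Real.pi) * Real.Gamma (N / 2))) =
      Real.Gamma ((n:ℝ) + N/4) * Real.Gamma ((n:ℝ) + N/4 + 1/2) /
        (Real.Gamma ((n:ℝ) + 1) * Real.Gamma ((n:ℝ) + (N-1)/2)) := by
  have hπ := Real.pi_pos
  have hn1 : (1:ℝ) ≤ (n:ℝ) := by exact_mod_cast hn
  -- product identity
  have hprod : (∏ k ∈ Finset.range (2 * n), (N + 2 * (k : ℝ)))
      = 2 ^ (2*n) * Real.Gamma (N/2 + (2*n : ℕ)) / Real.Gamma (N/2) := by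
    have h1 : ∀ k ∈ Finset.range (2*n), N + 2*(k:ℝ) = 2 * (N/2 + k) := by
      intro k _; ring
    rw [Finset.prod_congr rfl h1, Finset.prod_mul_distrib, Finset.prod_const,
      Finset.card_range, ← gamma_prod (N/2) (by linarith) (2*n)]
    have hG2 : Real.Gamma (N/2) ≠ 0 := ne_of_gt (Real.Gamma_pos_of_pos (by linarith))
    field_simp
  have hcast : N/2 + ((2*n : ℕ) : ℝ) = 2 * ((n:ℝ) + N/4) := by push_cast; ring
  have hdup : Real.Gamma (N/2 + (2*n : ℕ))
      = Real.Gamma ((n:ℝ) + N/4) * Real.Gamma ((n:ℝ) + N/4 + 1/2)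
        * (2:ℝ) ^ (2*(n:ℝ) + N/2 - 1) / Real.sqrt Real.pi := by
    have hd := Real.Gamma_mul_Gamma_add_half ((n:ℝ) + N/4)
    have hsp : Real.sqrt Real.pi ≠ 0 := by positivity
    rw [hcast, hd]
    have hone : (2:ℝ)^((1:ℝ)-2*((n:ℝ)+N/4)) * (2:ℝ)^(2*(n:ℝ)+N/2-1) = 1 := by
      rw [← Real.rpow_add (by norm_num : (0:ℝ) < 2)]
      have he : (1:ℝ)-2*((n:ℝ)+N/4) + (2*(n:ℝ)+N/2-1) = 0 := by ring
      rw [he, Real.rpow_zero]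
    have hre : Real.Gamma (2*((n:ℝ)+N/4)) * (2:ℝ)^((1:ℝ)-2*((n:ℝ)+N/4)) * Real.sqrt Real.pi
          * (2:ℝ)^(2*(n:ℝ)+N/2-1) / Real.sqrt Real.pi
        = Real.Gamma (2*((n:ℝ)+N/4)) * ((2:ℝ)^((1:ℝ)-2*((n:ℝ)+N/4)) * (2:ℝ)^(2*(n:ℝ)+N/2-1))
          * (Real.sqrt Real.pi / Real.sqrt Real.pi) := by ring
    rw [hre, hone, div_self hsp, mul_one, mul_one]
  have hsq : Real.sqrt (2 * Real.pi) = Real.sqrt 2 * Real.sqrt Real.pi :=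
    Real.sqrt_mul (by norm_num) _
  have hfact : Real.Gamma ((n:ℝ) + 1) = n.factorial := Real.Gamma_nat_eq_factorial n
  rw [hprod, hdup, hsq, hfact]
  -- nonzero facts
  have hG2 : Real.Gamma (N/2) ≠ 0 := ne_of_gt (Real.Gamma_pos_of_pos (by linarith))
  have hGa : Real.Gamma ((n:ℝ) + N/4) ≠ 0 := ne_of_gt (Real.Gamma_pos_of_pos (by linarith))
  have hGb : Real.Gamma ((n:ℝ) + N/4 + 1/2) ≠ 0 := ne_of_gt (Real.Gamma_pos_of_pos (by linarith))
  have hGe : Real.Gamma ((n:ℝ) + (N-1)/2) ≠ 0 := ne_of_gt (Real.Gamma_pos_of_pos (by linarith))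
  have hfac : (n.factorial : ℝ) ≠ 0 := by positivity
  have h24 : ((24:ℝ)^n) ≠ 0 := by positivity
  have h3e : ((3:ℝ)^((N-1)/2)) ≠ 0 := ne_of_gt (Real.rpow_pos_of_pos (by norm_num) _)
  have h23e : ((2/3:ℝ)^((n:ℝ)+(N-1)/2)) ≠ 0 := ne_of_gt (Real.rpow_pos_of_pos (by norm_num) _)
  have hs2 : Real.sqrt 2 ≠ 0 := by positivity
  have hsp : Real.sqrt Real.pi ≠ 0 := by positivity
  have h2r : ((2:ℝ)^(2*(n:ℝ)+N/2-1)) ≠ 0 := ne_of_gt (Real.rpow_pos_of_pos (by norm_num) _)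
  rw [div_div_div_eq]
  have e1 : 2 ^ (2 * n) * (Real.Gamma ((n:ℝ) + N/4) * Real.Gamma ((n:ℝ) + N/4 + 1/2)
        * (2:ℝ) ^ (2*(n:ℝ) + N/2 - 1) / Real.sqrt Real.pi) / Real.Gamma (N/2)
        * (Real.sqrt 2 * Real.sqrt Real.pi * Real.Gamma (N/2))
      = Real.Gamma ((n:ℝ) + N/4) * Real.Gamma ((n:ℝ) + N/4 + 1/2)
        * ((2:ℝ) ^ (2*n) * (2:ℝ) ^ (2*(n:ℝ) + N/2 - 1) * Real.sqrt 2)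
        * (Real.sqrt Real.pi / Real.sqrt Real.pi) * (Real.Gamma (N/2) / Real.Gamma (N/2)) := by
    ring
  rw [e1, div_self hsp, div_self hG2, mul_one, mul_one]
  have hX : ((2:ℝ) ^ (2*n) * (2:ℝ) ^ (2*(n:ℝ) + N/2 - 1) * Real.sqrt 2) ≠ 0 := by
    positivity
  have e2 : (n.factorial : ℝ) * 24 ^ n * ((3:ℝ) ^ ((N-1)/2) * (2/3:ℝ) ^ ((n:ℝ) + (N-1)/2)
        * Real.Gamma ((n:ℝ) + (N-1)/2))
      = ((n.factorial : ℝ) * Real.Gamma ((n:ℝ) + (N-1)/2))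
        * ((2:ℝ) ^ (2*n) * (2:ℝ) ^ (2*(n:ℝ) + N/2 - 1) * Real.sqrt 2) := by
    linear_combination ((n.factorial : ℝ) * Real.Gamma ((n:ℝ) + (N-1)/2)) * scalar_id N n
  rw [e2]
  have e3 : Real.Gamma ((n:ℝ) + N/4) * Real.Gamma ((n:ℝ) + N/4 + 1/2)
        * ((2:ℝ) ^ (2*n) * (2:ℝ) ^ (2*(n:ℝ) + N/2 - 1) * Real.sqrt 2)
        / (((n.factorial : ℝ) * Real.Gamma ((n:ℝ) + (N-1)/2))
          * ((2:ℝ) ^ (2*n) * (2:ℝ) ^ (2*(n:ℝ) + N/2 - 1) * Real.sqrt 2))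
      = Real.Gamma ((n:ℝ) + N/4) * Real.Gamma ((n:ℝ) + N/4 + 1/2)
        / ((n.factorial : ℝ) * Real.Gamma ((n:ℝ) + (N-1)/2))
        * (((2:ℝ) ^ (2*n) * (2:ℝ) ^ (2*(n:ℝ) + N/2 - 1) * Real.sqrt 2)
          / ((2:ℝ) ^ (2*n) * (2:ℝ) ^ (2*(n:ℝ) + N/2 - 1) * Real.sqrt 2)) := by
    ring
  rw [e3, div_self hX, mul_one]



section helpers
variable (N : ℝ)

lemma gamma_seq_pos (x : ℝ) (hx : 0 < x) (m : ℕ) (hm : 1 ≤ m) :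
    0 < Real.GammaSeq x m := by
  have hP : (0:ℝ) < ∏ j ∈ Finset.range (m+1), (x + j) := by
    apply Finset.prod_pos; intro i _; positivity
  have hmpos : (0:ℝ) < (m:ℝ) := by exact_mod_cast hm
  have : Real.GammaSeq x m = (m:ℝ)^x * m.factorial / ∏ j ∈ Finset.range (m+1), (x + j) := rfl
  rw [this]
  positivity

lemma gamma_prod' (s : ℝ) (hs : 0 < s) (m : ℕ) :
    Real.Gamma s * ∏ k ∈ Finset.range m, (s + k) = Real.Gamma (s + m) := by
  induction m with
  | zero => simp
  | succ m ih =>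
    rw [Finset.prod_range_succ, ← mul_assoc, ih]
    have h1 : s + (m + 1 : ℕ) = (s + m) + 1 := by push_cast; ring
    rw [h1, Real.Gamma_add_one (by positivity)]
    ring

lemma gamma_seq_eq (x : ℝ) (hx : 0 < x) (m : ℕ) (hm : 1 ≤ m) :
    Real.Gamma (x + (m+1 : ℕ)) = Real.Gamma x * ((m:ℝ)^x * m.factorial) / Real.GammaSeq x m := by
  have hP : (0:ℝ) < ∏ j ∈ Finset.range (m+1), (x + j) := by
    apply Finset.prod_pos; intro i _; positivity
  have hmpos : (0:ℝ) < (m:ℝ) := by exact_mod_cast hm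
  have hmx : (0:ℝ) < (m:ℝ) ^ x := Real.rpow_pos_of_pos hmpos x
  have hfac : (0:ℝ) < (m.factorial : ℝ) := by positivity
  have hGs : Real.GammaSeq x m
      = (m:ℝ)^x * m.factorial / ∏ j ∈ Finset.range (m+1), (x + j) := rfl
  rw [← gamma_prod' x hx (m+1), hGs]
  rw [mul_div_assoc]
  congr 1
  field_simp

end helpers

lemma T_eq (N : ℝ) (hN : 0 < N) (m : ℕ) (hm : 1 ≤ m) :
    Real.Gamma ((↑(m+2):ℝ) + N/4) * Real.Gamma ((↑(m+2):ℝ) + N/4 + 1/2) /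
      (Real.Gamma ((↑(m+2):ℝ) + 1) * Real.Gamma ((↑(m+2):ℝ) + (N-1)/2))
    = (Real.Gamma (N/4+1) * Real.Gamma (N/4+3/2) / (Real.Gamma 2 * Real.Gamma ((N+1)/2)))
      * ((Real.GammaSeq 2 m * Real.GammaSeq ((N+1)/2) m)
        / (Real.GammaSeq (N/4+1) m * Real.GammaSeq (N/4+3/2) m)) := by
  have hmpos : (0:ℝ) < (m:ℝ) := by exact_mod_cast hm
  have hA : (0:ℝ) < N/4+1 := by linarith
  have hB : (0:ℝ) < N/4+3/2 := by linarith
  have hC : (0:ℝ) < 2 := by norm_num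
  have hD : (0:ℝ) < (N+1)/2 := by linarith
  have cA : ((↑(m+2):ℝ) + N/4) = (N/4+1) + (m+1 : ℕ) := by push_cast; ring
  have cB : ((↑(m+2):ℝ) + N/4 + 1/2) = (N/4+3/2) + (m+1 : ℕ) := by push_cast; ring
  have cC : ((↑(m+2):ℝ) + 1) = (2:ℝ) + (m+1 : ℕ) := by push_cast; ring
  have cD : ((↑(m+2):ℝ) + (N-1)/2) = ((N+1)/2) + (m+1 : ℕ) := by push_cast; ring
  rw [cB, cA, cC, cD, gamma_seq_eq _ hA m hm, gamma_seq_eq _ hB m hm,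
    gamma_seq_eq _ hC m hm, gamma_seq_eq _ hD m hm]
  have gA := gamma_seq_pos (N/4+1) hA m hm
  have gB := gamma_seq_pos (N/4+3/2) hB m hm
  have gC := gamma_seq_pos 2 hC m hm
  have gD := gamma_seq_pos ((N+1)/2) hD m hm
  rw [div_mul_div_comm, div_mul_div_comm, div_div_div_eq, div_mul_div_comm]
  rw [div_eq_div_iff (by positivity) (by positivity)]
  have hm2 : (m:ℝ)^(N/4+1) * (m:ℝ)^(N/4+3/2) = (m:ℝ)^(2:ℝ) * (m:ℝ)^((N+1)/2) := by
    rw [← Real.rpow_add hmpos, ← Real.rpow_add hmpos]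
    congr 1
    ring
  have hrp : (m:ℝ)^(2:ℝ) = (m:ℝ)^(2:ℕ) := by
    rw [← Real.rpow_natCast (m:ℝ) 2]; norm_num
  linear_combination (Real.Gamma (N/4+1) * Real.Gamma (N/4+3/2) * Real.Gamma 2
    * Real.Gamma ((N+1)/2) * Real.GammaSeq (N/4+1) m * Real.GammaSeq (N/4+3/2) m
    * Real.GammaSeq 2 m * Real.GammaSeq ((N+1)/2) m * (m.factorial:ℝ)^2) * hm2


/-- Fix a real `N > 0` and set
`z_n := (∏_{k=0}^{2n-1} (N+2k)) / (n! · 24^n)` (the coefficients of the vacuum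
partition function of zero-dimensional O(N)-symmetric φ⁴ theory).  Then `z_n` is
asymptotic to
`3^((N-1)/2) · (2/3)^(n+(N-1)/2) · Γ(n+(N-1)/2) / (√(2π) · Γ(N/2))`
as `n → ∞`, i.e. the ratio tends to `1`. -/
theorem partition_function_asymptotics (N : ℝ) (hN : 0 < N) :
    Filter.Tendsto
      (fun n : ℕ =>
        ((∏ k ∈ Finset.range (2 * n), (N + 2 * (k : ℝ))) /
            ((n.factorial : ℝ) * 24 ^ n)) /
          ((3 : ℝ) ^ ((N - 1) / 2) * (2 / 3 : ℝ) ^ ((n : ℝ) + (N - 1) / 2) *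
              Real.Gamma ((n : ℝ) + (N - 1) / 2) /
            (Real.sqrt (2 * Real.pi) * Real.Gamma (N / 2))))
      Filter.atTop (nhds 1) := by
  have hA : (0:ℝ) < N/4+1 := by linarith
  have hB : (0:ℝ) < N/4+3/2 := by linarith
  have hC : (0:ℝ) < 2 := by norm_num
  have hD : (0:ℝ) < (N+1)/2 := by linarith
  have hGA := Real.Gamma_pos_of_pos hA
  have hGB := Real.Gamma_pos_of_pos hB
  have hGC := Real.Gamma_pos_of_pos hC
  have hGD := Real.Gamma_pos_of_pos hD
  set K : ℝ := Real.Gamma (N/4+1) * Real.Gamma (N/4+3/2)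
      / (Real.Gamma 2 * Real.Gamma ((N+1)/2)) with hK
  have hlim : Filter.Tendsto
      (fun m : ℕ => K * ((Real.GammaSeq 2 m * Real.GammaSeq ((N+1)/2) m)
        / (Real.GammaSeq (N/4+1) m * Real.GammaSeq (N/4+3/2) m)))
      Filter.atTop (nhds 1) := by
    have h1 := (Real.GammaSeq_tendsto_Gamma 2).mul (Real.GammaSeq_tendsto_Gamma ((N+1)/2))
    have hne : Real.Gamma (N/4+1) * Real.Gamma (N/4+3/2) ≠ 0 := by positivity
    have h2 := (Real.GammaSeq_tendsto_Gamma (N/4+1)).mul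
      (Real.GammaSeq_tendsto_Gamma (N/4+3/2))
    have h3 := tendsto_const_nhds (x := K) (f := Filter.atTop (α := ℕ)) |>.mul (h1.div h2 hne)
    have hval : K * (Real.Gamma 2 * Real.Gamma ((N+1)/2)
        / (Real.Gamma (N/4+1) * Real.Gamma (N/4+3/2))) = 1 := by
      rw [hK]
      field_simp
    rwa [hval] at h3
  have key : Filter.Tendsto
      (fun m : ℕ =>
        ((∏ k ∈ Finset.range (2 * (m+2)), (N + 2 * (k : ℝ))) /
            (((m+2).factorial : ℝ) * 24 ^ (m+2))) /
          ((3 : ℝ) ^ ((N - 1) / 2) * (2 / 3 : ℝ) ^ ((↑(m+2) : ℝ) + (N - 1) / 2) *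
              Real.Gamma ((↑(m+2) : ℝ) + (N - 1) / 2) /
            (Real.sqrt (2 * Real.pi) * Real.Gamma (N / 2))))
      Filter.atTop (nhds 1) := by
    apply hlim.congr'
    filter_upwards [Filter.eventually_ge_atTop 1] with m hm
    rw [ratio_eq N hN (m+2) (by omega), T_eq N hN m hm]
  exact (Filter.tendsto_add_atTop_iff_nat 2).mp key
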